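/- Let 0 < a ≤ b and let g : ℝ → ℝ satisfy a·|x − y| ≤ |g(x) − g(y)| ≤ b·|x − y| for all x, y ∈ ℝ. Then the pushforward g_*(Leb) of Lebesgue measure and Lebesgue measure itself are mutually absolutely continuous, and the Radon–Nikodym derivative d Leb / d(g_* Leb) satisfies a ≤ d Leb / d(g_* Leb) ≤ b almost everywhere. -/

import Mathlib

open MeasureTheory

/-- Volume of the image of a set under a Lipschitz map `ℝ → ℝ`. -/
lemma volume_image_le_of_lipschitz {K : NNReal} {f : ℝ → ℝ} (hf : LipschitzWith K f)
    (s : Set ℝ) : volume (f '' s) ≤ (K : ENNReal) * volume s := by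
  have h := hf.hausdorffMeasure_image_le (d := 1) zero_le_one s
  rwa [MeasureTheory.hausdorffMeasure_real, ENNReal.rpow_one] at h

/-- Let `0 < a ≤ b` and let `g : ℝ → ℝ` satisfy
`a * |x − y| ≤ |g x − g y| ≤ b * |x − y|` for all `x, y`.  Then the pushforward `g_* Leb` of
Lebesgue measure and Lebesgue measure are mutually absolutely continuous, and
`a ≤ d Leb / d (g_* Leb) ≤ b` almost everywhere. -/
theorem rnDeriv_of_biLipschitz_bounds
    (a b : ℝ) (ha : 0 < a) (hab : a ≤ b) (g : ℝ → ℝ)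
    (hg : ∀ x y : ℝ, a * |x - y| ≤ |g x - g y| ∧ |g x - g y| ≤ b * |x - y|) :
    (volume : Measure ℝ) ≪ Measure.map g volume ∧
    Measure.map g volume ≪ (volume : Measure ℝ) ∧
    ∀ᵐ x ∂(volume : Measure ℝ),
      ENNReal.ofReal a ≤ Measure.rnDeriv (volume : Measure ℝ) (Measure.map g volume) x ∧
      Measure.rnDeriv (volume : Measure ℝ) (Measure.map g volume) x ≤ ENNReal.ofReal b := by
  have hb : (0:ℝ) < b := ha.trans_le hab
  -- g is Lipschitz
  have hgLip : LipschitzWith b.toNNReal g := by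
    refine LipschitzWith.of_dist_le_mul fun x y => ?_
    simp only [Real.dist_eq, Real.coe_toNNReal b hb.le]
    exact (hg x y).2
  have hcont : Continuous g := hgLip.continuous
  -- g is injective
  have hinj : Function.Injective g := by
    intro x y hxy
    by_contra hne
    have h1 := (hg x y).1
    rw [hxy, sub_self, abs_zero] at h1
    have : 0 < a * |x - y| := mul_pos ha (abs_pos.mpr (sub_ne_zero.mpr hne))
    linarith
  -- g is surjective
  have hsurj : Function.Surjective g := by
    rcases hcont.strictMono_of_inj hinj with hm | hm
    · refine hcont.surjective ?_ ?_
      · refine Filter.tendsto_atTop_mono' _ (Filter.eventually_atTop.2 ⟨0, fun x hx => ?_⟩)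
          (Filter.tendsto_atTop_add_const_left _ (g 0) (Filter.tendsto_id.const_mul_atTop ha))
        have h1 := (hg x 0).1
        have h2 : g 0 ≤ g x := hm.monotone hx
        rw [sub_zero, abs_of_nonneg hx, abs_of_nonneg (by linarith)] at h1
        simp only [id_eq]; linarith
      · refine Filter.tendsto_atBot_mono' _ (Filter.eventually_atBot.2 ⟨0, fun x hx => ?_⟩)
          (Filter.tendsto_atBot_add_const_left _ (g 0) (Filter.tendsto_id.const_mul_atBot ha))
        have h1 := (hg x 0).1
        have h2 : g x ≤ g 0 := hm.monotone hx
        rw [sub_zero, abs_of_nonpos hx, abs_of_nonpos (by linarith)] at h1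
        simp only [id_eq]; linarith
    · refine hcont.surjective' ?_ ?_
      · refine Filter.tendsto_atTop_mono' _ (Filter.eventually_atBot.2 ⟨0, fun x hx => ?_⟩)
          (Filter.tendsto_atTop_add_const_left _ (g 0) (Filter.tendsto_neg_atBot_atTop.comp (Filter.tendsto_id.const_mul_atBot ha)))
        have h1 := (hg x 0).1
        have h2 : g 0 ≤ g x := hm.antitone hx
        rw [sub_zero, abs_of_nonpos hx, abs_of_nonneg (by linarith)] at h1
        simp only [Function.comp_apply, id_eq]; linarith
      · refine Filter.tendsto_atBot_mono' _ (Filter.eventually_atTop.2 ⟨0, fun x hx => ?_⟩)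
          (Filter.tendsto_atBot_add_const_left _ (g 0) (Filter.tendsto_neg_atTop_atBot.comp (Filter.tendsto_id.const_mul_atTop ha)))
        have h1 := (hg x 0).1
        have h2 : g x ≤ g 0 := hm.antitone hx
        rw [sub_zero, abs_of_nonneg hx, abs_of_nonpos (by linarith)] at h1
        simp only [Function.comp_apply, id_eq]; linarith
  set e : ℝ ≃ ℝ := Equiv.ofBijective g ⟨hinj, hsurj⟩ with he
  have hecoe : ∀ x, e x = g x := fun x => rfl
  -- the inverse is Lipschitz with constant a⁻¹
  have heinvLip : LipschitzWith (a⁻¹).toNNReal e.symm := by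
    refine LipschitzWith.of_dist_le_mul fun x y => ?_
    simp only [Real.dist_eq, Real.coe_toNNReal _ (inv_nonneg.mpr ha.le)]
    have h1 := (hg (e.symm x) (e.symm y)).1
    have hgx : g (e.symm x) = x := e.apply_symm_apply x
    have hgy : g (e.symm y) = y := e.apply_symm_apply y
    rw [hgx, hgy] at h1
    rw [inv_mul_eq_div, le_div_iff₀ ha, mul_comm]
    exact h1
  -- basic facts about the pushforward measure
  set ν : Measure ℝ := Measure.map g volume with hν
  have hmap : ∀ s : Set ℝ, MeasurableSet s → ν s = volume (g ⁻¹' s) := fun s hs =>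
    Measure.map_apply hcont.measurable hs
  have hpre : ∀ s : Set ℝ, g ⁻¹' s = e.symm '' s := by
    intro s
    rw [Equiv.image_eq_preimage_symm]
    rfl
  -- upper bound for ν
  have h1 : ∀ s : Set ℝ, MeasurableSet s → ν s ≤ (ENNReal.ofReal a)⁻¹ * volume s := by
    intro s hs
    rw [hmap s hs, hpre s, ← ENNReal.ofReal_inv_of_pos ha]
    exact volume_image_le_of_lipschitz heinvLip s
  -- lower bound for ν
  have h2 : ∀ s : Set ℝ, MeasurableSet s → volume s ≤ ENNReal.ofReal b * ν s := by
    intro s hs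
    rw [hmap s hs]
    calc volume s = volume (g '' (g ⁻¹' s)) := by rw [Set.image_preimage_eq s hsurj]
    _ ≤ (b.toNNReal : ENNReal) * volume (g ⁻¹' s) := volume_image_le_of_lipschitz hgLip _
    _ = ENNReal.ofReal b * volume (g ⁻¹' s) := by rw [ENNReal.ofReal]
  -- absolute continuity
  have hac1 : (volume : Measure ℝ) ≪ ν := by
    refine Measure.AbsolutelyContinuous.mk fun s hs hs0 => ?_
    have := h2 s hs
    rw [hs0, mul_zero] at this
    exact le_antisymm this zero_le
  have hac2 : ν ≪ (volume : Measure ℝ) := by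
    refine Measure.AbsolutelyContinuous.mk fun s hs hs0 => ?_
    have := h1 s hs
    rw [hs0, mul_zero] at this
    exact le_antisymm this zero_le
  refine ⟨hac1, hac2, ?_⟩
  -- ν is sigma-finite
  have hνle : ν ≤ ((a⁻¹).toNNReal : NNReal) • (volume : Measure ℝ) := by
    refine Measure.le_iff.mpr fun s hs => ?_
    rw [Measure.smul_apply, ENNReal.smul_def, smul_eq_mul]
    have : ((a⁻¹).toNNReal : ENNReal) = (ENNReal.ofReal a)⁻¹ := by
      rw [← ENNReal.ofReal_inv_of_pos ha]; rfl
    rw [this]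
    exact h1 s hs
  have hsf : SigmaFinite ν := Measure.sigmaFinite_of_le _ hνle
  have ha0 : ENNReal.ofReal a ≠ 0 := by
    simp [ENNReal.ofReal_eq_zero, not_le, ha]
  have hatop : ENNReal.ofReal a ≠ ⊤ := ENNReal.ofReal_ne_top
  -- a.e. bounds with respect to ν
  have hub : (volume : Measure ℝ).rnDeriv ν ≤ᵐ[ν] fun _ => ENNReal.ofReal b := by
    refine ae_le_of_forall_setLIntegral_le_of_sigmaFinite (Measure.measurable_rnDeriv _ _)
      fun s hs _ => ?_
    rw [Measure.setLIntegral_rnDeriv' hac1 hs, setLIntegral_const]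
    exact h2 s hs
  have hlb : (fun _ => ENNReal.ofReal a) ≤ᵐ[ν] (volume : Measure ℝ).rnDeriv ν := by
    refine ae_le_of_forall_setLIntegral_le_of_sigmaFinite measurable_const
      fun s hs _ => ?_
    rw [Measure.setLIntegral_rnDeriv' hac1 hs, setLIntegral_const]
    have := h1 s hs
    calc ENNReal.ofReal a * ν s ≤ ENNReal.ofReal a * ((ENNReal.ofReal a)⁻¹ * volume s) :=
      mul_le_mul_right this _
    _ = volume s := by
      rw [← mul_assoc, ENNReal.mul_inv_cancel ha0 hatop, one_mul]
  have hcomb : ∀ᵐ x ∂ν, ENNReal.ofReal a ≤ (volume : Measure ℝ).rnDeriv ν x ∧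
      (volume : Measure ℝ).rnDeriv ν x ≤ ENNReal.ofReal b := hlb.and hub
  exact hac1.ae_le hcomb
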